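/- arXiv:1103.1487 — 3 statements merged into one kernel-verified Lean document; each statement's English description precedes it below -/
import Mathlib

section
/- Let A and L be bounded operators on a complex separable Hilbert space H with L - A of trace class. Let λ₁, ..., λ_N be finitely many eigenvalues of L (from its discrete spectrum, counted with algebraic multiplicity, listed via a Schur orthonormal sequence g₁,...,g_N satisfying L g_n ∈ span{g₁,...,g_n} and ⟨L g_n, g_n⟩ = λ_n). Then ∑_{n=1}^N dist(λ_n, Num(A)) ≤ ‖L - A‖_tr, where Num(A) = {⟨Af, f⟩ : ‖f‖ = 1} is the numerical range of A. -/
/-- Let `A, L` be bounded operators on a complex separable Hilbert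
space such that `T = L - A` is trace class, given here by a singular value decomposition
`T x = ∑ₙ sₙ ⟨x, eₙ⟩ fₙ` with `{eₙ}, {fₙ}` orthonormal, `sₙ ≥ 0` summable, so that
`‖L - A‖_tr = ∑ₙ sₙ`. Let `λ₁, …, λ_N` be eigenvalues of `L` listed via a Schur
orthonormal sequence `g₁, …, g_N` with `L gₙ ∈ span{g₁, …, gₙ}` and `⟨L gₙ, gₙ⟩ = λₙ`.
Then `∑ₙ dist(λₙ, Num(A)) ≤ ‖L - A‖_tr`, where `Num(A) = {⟨Ax, x⟩ : ‖x‖ = 1}`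
(inner products linear in the first slot: `⟨u, v⟩ = inner v u` in Mathlib). -/
theorem sum_dist_numRange_le_traceNorm
    {H : Type*} [NormedAddCommGroup H] [InnerProductSpace ℂ H] [CompleteSpace H]
    [TopologicalSpace.SeparableSpace H]
    (A L : H →L[ℂ] H)
    (s : ℕ → ℝ) (e f : ℕ → H)
    (hs : ∀ n, 0 ≤ s n) (hsum : Summable s)
    (he : Orthonormal ℂ e) (hf : Orthonormal ℂ f)
    (hsvd : ∀ x : H, (L - A) x = ∑' n : ℕ, ((s n : ℂ) * @inner ℂ _ _ (e n) x) • f n)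
    (N : ℕ) (g : Fin N → H) (hg : Orthonormal ℂ g) (lam : Fin N → ℂ)
    (hschur : ∀ n : Fin N, L (g n) ∈ Submodule.span ℂ (g '' Set.Iic n))
    (hdiag : ∀ n : Fin N, @inner ℂ _ _ (g n) (L (g n)) = lam n) :
    ∑ n : Fin N,
        Metric.infDist (lam n) {z : ℂ | ∃ x : H, ‖x‖ = 1 ∧ @inner ℂ _ _ x (A x) = z}
      ≤ ∑' n : ℕ, s n := by
  classical
  set S := {z : ℂ | ∃ x : H, ‖x‖ = 1 ∧ @inner ℂ _ _ x (A x) = z} with hS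
  -- the svd series is summable
  have hc : ∀ x : H, Summable (fun k => ((s k : ℂ) * @inner ℂ _ _ (e k) x) • f k) := by
    intro x
    refine Summable.of_norm ?_
    refine Summable.of_nonneg_of_le (fun k => norm_nonneg _) ?_ (hsum.mul_right ‖x‖)
    intro k
    rw [norm_smul, norm_mul, hf.1 k, mul_one, Complex.norm_real,
      Real.norm_eq_abs, abs_of_nonneg (hs k)]
    exact mul_le_mul_of_nonneg_left
      ((norm_inner_le_norm _ _).trans (by rw [he.1 k, one_mul])) (hs k)
  -- the term
  set T : ℕ → Fin N → ℝ :=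
    fun k n => s k * (‖@inner ℂ _ _ (e k) (g n)‖ * ‖@inner ℂ _ _ (g n) (f k)‖) with hT
  have hab : ∀ k n, ‖@inner ℂ _ _ (e k) (g n)‖ * ‖@inner ℂ _ _ (g n) (f k)‖ ≤ 1 := by
    intro k n
    have h1 : ‖@inner ℂ _ _ (e k) (g n)‖ ≤ 1 :=
      (norm_inner_le_norm _ _).trans (by rw [he.1 k, hg.1 n, one_mul])
    have h2 : ‖@inner ℂ _ _ (g n) (f k)‖ ≤ 1 :=
      (norm_inner_le_norm _ _).trans (by rw [hf.1 k, hg.1 n, one_mul])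
    calc _ ≤ 1 * 1 := mul_le_mul h1 h2 (norm_nonneg _) zero_le_one
      _ = 1 := one_mul 1
  have hTsumm : ∀ n, Summable (fun k => T k n) := by
    intro n
    refine Summable.of_nonneg_of_le
      (fun k => mul_nonneg (hs k) (mul_nonneg (norm_nonneg _) (norm_nonneg _))) ?_ hsum
    intro k
    calc T k n ≤ s k * 1 := mul_le_mul_of_nonneg_left (hab k n) (hs k)
      _ = s k := mul_one _
  have key : ∀ n : Fin N, Metric.infDist (lam n) S ≤ ∑' k, T k n := by
    intro n
    have hmem : (@inner ℂ _ _ (g n) (A (g n))) ∈ S := ⟨g n, hg.1 n, rfl⟩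
    have step1 : Metric.infDist (lam n) S ≤ ‖lam n - @inner ℂ _ _ (g n) (A (g n))‖ := by
      simpa [Complex.dist_eq] using Metric.infDist_le_dist_of_mem hmem
    have step2 : lam n - @inner ℂ _ _ (g n) (A (g n))
        = ∑' k, ((s k : ℂ) * @inner ℂ _ _ (e k) (g n)) * @inner ℂ _ _ (g n) (f k) := by
      rw [← hdiag n, ← inner_sub_right, ← ContinuousLinearMap.sub_apply, hsvd (g n)]
      calc (innerSL ℂ (g n)) (∑' k, ((s k : ℂ) * @inner ℂ _ _ (e k) (g n)) • f k)
          = ∑' k, (innerSL ℂ (g n)) (((s k : ℂ) * @inner ℂ _ _ (e k) (g n)) • f k) :=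
            ContinuousLinearMap.map_tsum _ (hc (g n))
        _ = ∑' k, ((s k : ℂ) * @inner ℂ _ _ (e k) (g n)) * @inner ℂ _ _ (g n) (f k) := by
            simp [inner_smul_right]
    rw [step2] at step1
    refine step1.trans ?_
    refine (norm_tsum_le_tsum_norm ?_).trans_eq ?_
    · refine Summable.of_nonneg_of_le (fun k => norm_nonneg _) ?_ hsum
      intro k
      rw [norm_mul, norm_mul, Complex.norm_real, Real.norm_eq_abs, abs_of_nonneg (hs k)]
      calc s k * ‖@inner ℂ _ _ (e k) (g n)‖ * ‖@inner ℂ _ _ (g n) (f k)‖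
          = s k * (‖@inner ℂ _ _ (e k) (g n)‖ * ‖@inner ℂ _ _ (g n) (f k)‖) := by ring
        _ ≤ s k * 1 := mul_le_mul_of_nonneg_left (hab k n) (hs k)
        _ = s k := mul_one _
    · refine tsum_congr fun k => ?_
      rw [norm_mul, norm_mul, Complex.norm_real, Real.norm_eq_abs, abs_of_nonneg (hs k), hT]
      ring
  calc ∑ n : Fin N, Metric.infDist (lam n) S
      ≤ ∑ n : Fin N, ∑' k, T k n := Finset.sum_le_sum fun n _ => key n
    _ = ∑' k, ∑ n : Fin N, T k n := (Summable.tsum_finsetSum fun n _ => hTsumm n).symm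
    _ ≤ ∑' k, s k := by
        refine Summable.tsum_le_tsum ?_ (summable_sum fun n _ => hTsumm n) hsum
        intro k
        have bessel_e : ∑ n : Fin N, ‖@inner ℂ _ _ (g n) (e k)‖ ^ 2 ≤ 1 := by
          simpa [he.1 k] using hg.sum_inner_products_le (e k) (s := Finset.univ)
        have bessel_f : ∑ n : Fin N, ‖@inner ℂ _ _ (g n) (f k)‖ ^ 2 ≤ 1 := by
          simpa [hf.1 k] using hg.sum_inner_products_le (f k) (s := Finset.univ)
        have bessel_e' : ∑ n : Fin N, ‖@inner ℂ _ _ (e k) (g n)‖ ^ 2 ≤ 1 := by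
          calc ∑ n : Fin N, ‖@inner ℂ _ _ (e k) (g n)‖ ^ 2
              = ∑ n : Fin N, ‖@inner ℂ _ _ (g n) (e k)‖ ^ 2 :=
                Finset.sum_congr rfl fun n _ => by rw [norm_inner_symm]
            _ ≤ 1 := bessel_e
        have hcs : ∑ n : Fin N, ‖@inner ℂ _ _ (e k) (g n)‖ * ‖@inner ℂ _ _ (g n) (f k)‖ ≤ 1 := by
          have h2 : ∀ n : Fin N, ‖@inner ℂ _ _ (e k) (g n)‖ * ‖@inner ℂ _ _ (g n) (f k)‖
              ≤ (‖@inner ℂ _ _ (e k) (g n)‖ ^ 2 + ‖@inner ℂ _ _ (g n) (f k)‖ ^ 2) / 2 := by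
            intro n
            nlinarith [sq_nonneg (‖@inner ℂ _ _ (e k) (g n)‖ - ‖@inner ℂ _ _ (g n) (f k)‖)]
          calc _ ≤ ∑ n : Fin N, (‖@inner ℂ _ _ (e k) (g n)‖ ^ 2 + ‖@inner ℂ _ _ (g n) (f k)‖ ^ 2) / 2 :=
                Finset.sum_le_sum fun n _ => h2 n
            _ = ((∑ n : Fin N, ‖@inner ℂ _ _ (e k) (g n)‖ ^ 2)
                + ∑ n : Fin N, ‖@inner ℂ _ _ (g n) (f k)‖ ^ 2) / 2 := by
                rw [← Finset.sum_add_distrib, ← Finset.sum_div]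
            _ ≤ (1 + 1) / 2 := by linarith
            _ = 1 := by norm_num
        calc ∑ n : Fin N, T k n
            = s k * ∑ n : Fin N, ‖@inner ℂ _ _ (e k) (g n)‖ * ‖@inner ℂ _ _ (g n) (f k)‖ := by
              rw [Finset.mul_sum]
          _ ≤ s k * 1 := mul_le_mul_of_nonneg_left hcs (hs k)
          _ = s k := mul_one _
end

section
/- Let h be holomorphic on 𝔻 and suppose Bh = Kσ for some finite complex Borel measure σ on 𝕋, where (Bh)(w) = (h(w) - h(0))/w. Define the measure μ(dζ) = ζσ(dζ) + (h(0) - c_σ) m(dζ), where c_σ = ∫_𝕋 ζ dσ(ζ) and m is normalized Lebesgue measure on 𝕋. Then h = Kμ; in particular h is a Cauchy transform. -/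
open MeasureTheory Metric Real

lemma circle_int (w : ℂ) (hw : w ∈ ball (0:ℂ) 1) :
    (∫ θ in (0:ℝ)..(2*π),
      (1 - w * (starRingEnd ℂ) (Complex.exp (θ * Complex.I)))⁻¹) = 2*π := by
  have hw1 : ‖w‖ < 1 := mem_ball_zero_iff.mp hw
  have h1 : (∮ z in C(0,1), (z - w)⁻¹) = 2*π*Complex.I :=
    circleIntegral.integral_sub_inv_of_mem_ball (by simpa using hw)
  rw [circleIntegral] at h1
  have key : ∀ θ : ℝ, deriv (circleMap 0 1) θ • (circleMap 0 1 θ - w)⁻¹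
      = Complex.I * (1 - w * (starRingEnd ℂ) (Complex.exp (θ * Complex.I)))⁻¹ := by
    intro θ
    set e := Complex.exp (θ * Complex.I) with hedef
    have he : circleMap 0 1 θ = e := by simp [circleMap, hedef]
    have hne : e ≠ 0 := Complex.exp_ne_zero _
    have hnorm : ‖e‖ = 1 := by simp [hedef, Complex.norm_exp]
    have hconj : (starRingEnd ℂ) e = e⁻¹ := by
      rw [hedef, ← Complex.exp_conj, ← Complex.exp_neg]
      congr 1
      simp [Complex.conj_I]
    have hsub : e - w ≠ 0 := by
      intro hc
      rw [sub_eq_zero] at hc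
      rw [← hc, hnorm] at hw1; exact lt_irrefl _ hw1
    have hfac : 1 - w * e⁻¹ = e⁻¹ * (e - w) := by field_simp
    rw [deriv_circleMap, he, smul_eq_mul, hconj, hfac, mul_inv, inv_inv]
    ring
  simp_rw [key] at h1
  rw [intervalIntegral.integral_const_mul] at h1
  have h2 : (2*↑π*Complex.I : ℂ) = Complex.I * (2*π) := by ring
  rw [h2] at h1
  exact mul_left_cancel₀ Complex.I_ne_zero h1


/-- Let `h` be holomorphic on the unit disk with `Bh = Kσ` for a
finite complex Borel measure `σ` on the circle (polar form `dσ = ρ dν`). With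
`c_σ = ∫ ζ dσ(ζ)` and `m` the normalized Lebesgue measure on the circle (parametrized
by `θ ↦ exp(iθ)`), the measure `μ(dζ) = ζ σ(dζ) + (h(0) - c_σ) m(dζ)` satisfies
`h = Kμ`; in particular `h` is a Cauchy transform. -/
theorem cauchyTransform_of_backwardShift
    (h : ℂ → ℂ) (hh : DifferentiableOn ℂ h (ball (0:ℂ) 1))
    (ν : Measure ℂ) [IsFiniteMeasure ν] (hcirc : ∀ᵐ ζ ∂ν, ‖ζ‖ = 1)
    (ρ : ℂ → ℂ) (hρ : Integrable ρ ν)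
    (hB : ∀ w ∈ ball (0:ℂ) 1, w ≠ 0 →
      (h w - h 0) / w = ∫ ζ, (1 - w * (starRingEnd ℂ) ζ)⁻¹ * ρ ζ ∂ν) :
    ∀ w ∈ ball (0:ℂ) 1,
      h w = (∫ ζ, (1 - w * (starRingEnd ℂ) ζ)⁻¹ * (ζ * ρ ζ) ∂ν)
        + (h 0 - ∫ ζ, ζ * ρ ζ ∂ν) *
          ((1 / (2 * π)) *
            ∫ θ in (0:ℝ)..(2 * π),
              (1 - w * (starRingEnd ℂ) (Complex.exp (θ * Complex.I)))⁻¹) := by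
  intro w hw
  have hw1 : ‖w‖ < 1 := mem_ball_zero_iff.mp hw
  rw [circle_int w hw]
  have hpi : (2 * (π:ℂ)) ≠ 0 := by
    simp [Real.pi_ne_zero, Complex.ofReal_ne_zero]
  have hcoef : ((1:ℂ) / (2 * π)) * (2 * π) = 1 := by
    field_simp
  rw [hcoef, mul_one]
  -- notation
  set g : ℂ → ℂ := fun ζ => (1 - w * (starRingEnd ℂ) ζ)⁻¹ with hg
  -- measurability of g
  have meas_g : AEStronglyMeasurable g ν := by
    apply Measurable.aestronglyMeasurable
    exact (measurable_const.sub (measurable_const.mul (RCLike.continuous_conj (K := ℂ)).measurable)).inv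
  -- a.e. bound on g
  have hbound : ∀ᵐ ζ ∂ν, ‖g ζ‖ ≤ (1 - ‖w‖)⁻¹ := by
    filter_upwards [hcirc] with ζ hζ
    have h1 : ‖w * (starRingEnd ℂ) ζ‖ = ‖w‖ := by
      rw [norm_mul, RCLike.norm_conj, hζ, mul_one]
    have h2 : (1 - ‖w‖) ≤ ‖1 - w * (starRingEnd ℂ) ζ‖ := by
      calc 1 - ‖w‖ = ‖(1:ℂ)‖ - ‖w * (starRingEnd ℂ) ζ‖ := by rw [h1, norm_one]
        _ ≤ ‖1 - w * (starRingEnd ℂ) ζ‖ := norm_sub_norm_le _ _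
    rw [hg]
    simp only [norm_inv]
    exact inv_anti₀ (by linarith) h2
  have int1 : Integrable (fun ζ => g ζ * ρ ζ) ν := by
    apply Integrable.mono' (hρ.norm.const_mul ((1 - ‖w‖)⁻¹))
      (meas_g.mul hρ.aestronglyMeasurable)
    filter_upwards [hbound] with ζ hζ
    simp only [Pi.mul_apply]
    rw [norm_mul]
    exact mul_le_mul_of_nonneg_right hζ (norm_nonneg _)
  have int2 : Integrable (fun ζ => ζ * ρ ζ) ν := by
    apply Integrable.mono' hρ.norm
      (Continuous.aestronglyMeasurable continuous_id |>.mul hρ.aestronglyMeasurable)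
    filter_upwards [hcirc] with ζ hζ
    simp only [Pi.mul_apply, id_eq]
    rw [norm_mul, hζ, one_mul]
  have int3 : Integrable (fun ζ => g ζ * (ζ * ρ ζ)) ν := by
    apply Integrable.mono' (hρ.norm.const_mul ((1 - ‖w‖)⁻¹))
      (meas_g.mul (Continuous.aestronglyMeasurable continuous_id |>.mul hρ.aestronglyMeasurable))
    filter_upwards [hbound, hcirc] with ζ h1 h2
    simp only [Pi.mul_apply, id_eq]
    rw [norm_mul, norm_mul, h2, one_mul]
    exact mul_le_mul_of_nonneg_right h1 (norm_nonneg _)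
  -- pointwise identity
  have hpt : ∀ᵐ ζ ∂ν, g ζ * (ζ * ρ ζ) = ζ * ρ ζ + w * (g ζ * ρ ζ) := by
    filter_upwards [hcirc] with ζ hζ
    have hone : ζ * (starRingEnd ℂ) ζ = 1 := by
      rw [Complex.mul_conj]
      norm_cast
      rw [Complex.normSq_eq_norm_sq, hζ]; norm_num
    have hne : (1 - w * (starRingEnd ℂ) ζ) ≠ 0 := by
      intro hc
      rw [sub_eq_zero] at hc
      have : ‖w * (starRingEnd ℂ) ζ‖ = ‖w‖ := by
        rw [norm_mul, RCLike.norm_conj, hζ, mul_one]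
      rw [← hc] at this
      simp at this
      rw [← this] at hw1; exact lt_irrefl _ hw1
    rw [hg]
    field_simp
    linear_combination (w * ρ ζ) * hone
  have hint : (∫ ζ, g ζ * (ζ * ρ ζ) ∂ν)
      = (∫ ζ, ζ * ρ ζ ∂ν) + w * ∫ ζ, g ζ * ρ ζ ∂ν := by
    rw [integral_congr_ae hpt, integral_add int2 (int1.const_mul w),
      MeasureTheory.integral_const_mul]
  rw [hint]
  by_cases hw0 : w = 0
  · subst hw0; ring
  · rw [← hB w hw hw0]
    field_simp
    ring
end

section
/- Let h(w) = 1 + w/(1+w) for w ∈ 𝔻. Then h has exactly one zero z = -1/2 in 𝔻, and ∑_{z ∈ Z(h)}(|z|^{-1} - 1) = 1 = ‖δ_{-1}‖, where Bh = K δ_{-1} is the Cauchy transform of the Dirac measure at -1 on the unit circle. Hence the bound ∑_{z ∈ Z(h)}(|z|^{-1} - 1) ≤ ‖Bh‖_𝒦 is attained with equality. -/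
open Metric

/-- For `h(w) = 1 + w/(1+w)` on the unit disk: `h` has exactly one
zero in `𝔻`, namely `z = -1/2`, which is simple; `∑_{z ∈ Z(h)}(|z|⁻¹ - 1) = 1`; and
`Bh(w) = (h(w) - h(0))/w = 1/(1 + w)` is the Cauchy transform of the Dirac measure
`δ₋₁` (total variation `1`), so the Blaschke-type bound is attained with equality. -/
theorem example_equality_case :
    (∀ w ∈ ball (0:ℂ) 1, (1 + w / (1 + w) = 0 ↔ w = -(1/2))) ∧
    deriv (fun w : ℂ => 1 + w / (1 + w)) (-(1/2)) ≠ 0 ∧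
    ‖(-(1/2) : ℂ)‖⁻¹ - 1 = 1 ∧
    (∀ w ∈ ball (0:ℂ) 1, w ≠ 0 →
      ((1 + w / (1 + w)) - (1 + (0:ℂ) / (1 + 0))) / w
        = (1 - w * (starRingEnd ℂ) (-1))⁻¹) := by
  have hne : ∀ w ∈ ball (0:ℂ) 1, (1 + w) ≠ 0 := by
    intro w hw h
    have : w = -1 := by linear_combination h
    simp [this, mem_ball, dist_eq_norm] at hw
  refine ⟨?_, ?_, ?_, ?_⟩
  · intro w hw
    have h1 := hne w hw
    constructor
    · intro h
      have : 1 + 2 * w = 0 := by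
        field_simp at h
        linear_combination h
      linear_combination this / 2
    · intro h
      subst h
      norm_num
  · have hd : HasDerivAt (fun w : ℂ => 1 + w / (1 + w)) 4 (-(1/2)) := by
      have h1 : (1 + (-(1/2) : ℂ)) ≠ 0 := by norm_num
      have := (hasDerivAt_id (-(1/2) : ℂ)).div ((hasDerivAt_const _ (1:ℂ)).add (hasDerivAt_id _)) h1
      have h2 := (hasDerivAt_const (-(1/2) : ℂ) (1:ℂ)).add this
      refine h2.congr_deriv ?_
      norm_num
    rw [hd.deriv]
    norm_num
  · norm_num
  · intro w hw hw0
    have h1 := hne w hw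
    rw [show (starRingEnd ℂ) (-1) = -1 by simp]
    field_simp
    rw [eq_div_iff (by rwa [sub_neg_eq_add])]
    ring
end
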